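/- Let n be a positive integer, let ι be a nonempty finite type, and let f₁, f₂ : ι → Fin n → ℝ. Then Rad(fun g i => |f₁ g i − f₂ g i|) ≤ Rad(f₁) + Rad(f₂), where for h : ι → Fin n → ℝ, Rad(h) := (1/2^n) · ∑_{σ : Fin n → Bool} max_{g ∈ ι} (1/n) · ∑_{i} ε_σ(i) · h g i, and ε_σ(i) = 1 if σ i = true and ε_σ(i) = −1 otherwise. -/

import Mathlib

open Finset

/-- The empirical Rademacher average of a family `h : ι → Fin n → ℝ`. -/
noncomputable def rad {ι : Type*} [Fintype ι] [Nonempty ι] (n : ℕ)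
    (h : ι → Fin n → ℝ) : ℝ :=
  (1 / 2 ^ n) * ∑ σ : Fin n → Bool,
    Finset.univ.sup' Finset.univ_nonempty fun g =>
      (1 / n : ℝ) * ∑ i, (if σ i then (1 : ℝ) else -1) * h g i

lemma sup'_abs_pair {ι : Type*} [Fintype ι] [Nonempty ι] (F a : ι → ℝ) :
    (univ.sup' univ_nonempty fun g => F g + |a g|)
      + (univ.sup' univ_nonempty fun g => F g - |a g|)
    ≤ (univ.sup' univ_nonempty fun g => F g + a g)
      + (univ.sup' univ_nonempty fun g => F g - a g) := by
  obtain ⟨g₁, -, h₁⟩ := Finset.exists_mem_eq_sup' Finset.univ_nonempty (fun g => F g + |a g|)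
  obtain ⟨g₂, -, h₂⟩ := Finset.exists_mem_eq_sup' Finset.univ_nonempty (fun g => F g - |a g|)
  rw [h₁, h₂]
  rcases le_or_gt 0 (a g₁) with h | h
  · have e1 := Finset.le_sup' (fun g => F g + a g) (mem_univ g₁)
    have e2 := Finset.le_sup' (fun g => F g - a g) (mem_univ g₂)
    have := le_abs_self (a g₂)
    rw [abs_of_nonneg h]
    linarith
  · have e1 := Finset.le_sup' (fun g => F g - a g) (mem_univ g₁)
    have e2 := Finset.le_sup' (fun g => F g + a g) (mem_univ g₂)
    have := neg_abs_le (a g₂)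
    rw [abs_of_neg h]
    linarith

lemma contraction_step {ι : Type*} [Fintype ι] [Nonempty ι] {n : ℕ}
    (d : ι → Fin n → ℝ) (c : ℝ) (hc : 0 ≤ c) (S : Finset (Fin n)) (j : Fin n) (hj : j ∉ S) :
    (∑ σ : Fin n → Bool, univ.sup' univ_nonempty fun g =>
        c * ∑ i, (if σ i then (1 : ℝ) else -1) * (if i ∈ insert j S then |d g i| else d g i))
    ≤ ∑ σ : Fin n → Bool, univ.sup' univ_nonempty fun g =>
        c * ∑ i, (if σ i then (1 : ℝ) else -1) * (if i ∈ S then |d g i| else d g i) := by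
  classical
  rw [← Equiv.sum_comp (Equiv.funSplitAt j Bool).symm
    (fun σ => univ.sup' univ_nonempty fun g =>
        c * ∑ i, (if σ i then (1 : ℝ) else -1) * (if i ∈ insert j S then |d g i| else d g i)),
    ← Equiv.sum_comp (Equiv.funSplitAt j Bool).symm
    (fun σ => univ.sup' univ_nonempty fun g =>
        c * ∑ i, (if σ i then (1 : ℝ) else -1) * (if i ∈ S then |d g i| else d g i)),
    Fintype.sum_prod_type, Fintype.sum_prod_type]
  rw [Fintype.sum_bool, Fintype.sum_bool, ← Finset.sum_add_distrib, ← Finset.sum_add_distrib]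
  apply Finset.sum_le_sum
  intro τ _
  set σt := (Equiv.funSplitAt j Bool).symm (true, τ) with hσt
  set σf := (Equiv.funSplitAt j Bool).symm (false, τ) with hσf
  have εt : (if σt j then (1 : ℝ) else -1) = 1 := by simp [hσt]
  have εf : (if σf j then (1 : ℝ) else -1) = -1 := by simp [hσf]
  have hoff : ∀ i : Fin n, i ≠ j → σt i = σf i := by
    intro i hij
    simp [hσt, hσf, Equiv.funSplitAt, Equiv.piSplitAt, hij]
  set F : ι → ℝ := fun g =>
    c * ∑ i ∈ ({j}ᶜ : Finset (Fin n)),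
      (if σf i then (1 : ℝ) else -1) * (if i ∈ S then |d g i| else d g i) with hF
  have hsum : ∀ (σ' : Fin n → Bool), (∀ i, i ≠ j → σ' i = σf i) → ∀ g : ι,
      (∑ i ∈ ({j}ᶜ : Finset (Fin n)),
        (if σ' i then (1 : ℝ) else -1) * (if i ∈ insert j S then |d g i| else d g i))
      = ∑ i ∈ ({j}ᶜ : Finset (Fin n)),
        (if σf i then (1 : ℝ) else -1) * (if i ∈ S then |d g i| else d g i) := by
    intro σ' hσ' g
    refine Finset.sum_congr rfl fun i hi => ?_
    have hij : i ≠ j := by simpa using hi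
    rw [hσ' i hij]
    congr 1
    exact if_congr (by simp [Finset.mem_insert, hij]) rfl rfl
  have hsumS : ∀ g : ι,
      (∑ i ∈ ({j}ᶜ : Finset (Fin n)),
        (if σt i then (1 : ℝ) else -1) * (if i ∈ S then |d g i| else d g i))
      = ∑ i ∈ ({j}ᶜ : Finset (Fin n)),
        (if σf i then (1 : ℝ) else -1) * (if i ∈ S then |d g i| else d g i) := by
    intro g
    refine Finset.sum_congr rfl fun i hi => ?_
    have hij : i ≠ j := by simpa using hi
    rw [hoff i hij]
  have h1 : ∀ g : ι,
      c * ∑ i, (if σt i then (1 : ℝ) else -1) * (if i ∈ insert j S then |d g i| else d g i)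
        = F g + |c * d g j| := by
    intro g
    rw [Fintype.sum_eq_add_sum_compl j, εt, one_mul,
      if_pos (Finset.mem_insert_self j S), hsum σt (fun i hi => hoff i hi) g,
      abs_mul, abs_of_nonneg hc]
    simp only [hF]
    ring
  have h2 : ∀ g : ι,
      c * ∑ i, (if σf i then (1 : ℝ) else -1) * (if i ∈ insert j S then |d g i| else d g i)
        = F g - |c * d g j| := by
    intro g
    rw [Fintype.sum_eq_add_sum_compl j, εf,
      if_pos (Finset.mem_insert_self j S), hsum σf (fun _ _ => rfl) g,
      abs_mul, abs_of_nonneg hc]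
    simp only [hF]
    ring
  have h3 : ∀ g : ι,
      c * ∑ i, (if σt i then (1 : ℝ) else -1) * (if i ∈ S then |d g i| else d g i)
        = F g + c * d g j := by
    intro g
    rw [Fintype.sum_eq_add_sum_compl j, εt, one_mul, if_neg hj, hsumS g]
    simp only [hF]
    ring
  have h4 : ∀ g : ι,
      c * ∑ i, (if σf i then (1 : ℝ) else -1) * (if i ∈ S then |d g i| else d g i)
        = F g - c * d g j := by
    intro g
    rw [Fintype.sum_eq_add_sum_compl j, εf, if_neg hj]
    simp only [hF]
    ring
  simp only [h1, h2, h3, h4]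
  exact sup'_abs_pair F (fun g => c * d g j)

lemma contraction_aux {ι : Type*} [Fintype ι] [Nonempty ι] {n : ℕ}
    (d : ι → Fin n → ℝ) (c : ℝ) (hc : 0 ≤ c) (S : Finset (Fin n)) :
    (∑ σ : Fin n → Bool, univ.sup' univ_nonempty fun g =>
        c * ∑ i, (if σ i then (1 : ℝ) else -1) * (if i ∈ S then |d g i| else d g i))
    ≤ ∑ σ : Fin n → Bool, univ.sup' univ_nonempty fun g =>
        c * ∑ i, (if σ i then (1 : ℝ) else -1) * d g i := by
  classical
  induction S using Finset.induction_on with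
  | empty => simp
  | @insert j S hj ih => exact le_trans (contraction_step d c hc S j hj) ih

lemma sup'_add_le {ι : Type*} [Fintype ι] [Nonempty ι] (u v : ι → ℝ) :
    (univ.sup' univ_nonempty fun g => u g + v g)
      ≤ (univ.sup' univ_nonempty u) + univ.sup' univ_nonempty v :=
  Finset.sup'_le _ _ fun g hg =>
    add_le_add (Finset.le_sup' u hg) (Finset.le_sup' v hg)

/-- The absolute-difference bound (via Talagrand's contraction): the Rademacher
average of the family of absolute differences is bounded by the sum of the
Rademacher averages. -/
theorem rad_abs_sub_le_add
    (n : ℕ) (hn : 0 < n) (ι : Type*) [Fintype ι] [Nonempty ι]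
    (f₁ f₂ : ι → Fin n → ℝ) :
    rad n (fun g i => |f₁ g i - f₂ g i|) ≤ rad n f₁ + rad n f₂ := by
  classical
  have hc : (0 : ℝ) ≤ (1 / n : ℝ) := by positivity
  have hpow : (0 : ℝ) ≤ 1 / 2 ^ n := by positivity
  set d : ι → Fin n → ℝ := fun g i => f₁ g i - f₂ g i with hd
  -- Step 1: contraction
  have step1 : rad n (fun g i => |f₁ g i - f₂ g i|) ≤ rad n d := by
    unfold rad
    apply mul_le_mul_of_nonneg_left _ hpow
    have := contraction_aux d (1 / n : ℝ) hc Finset.univ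
    simpa [hd] using this
  -- Step 2: rad d ≤ rad f₁ + rad f₂
  have flipinv : Function.Involutive (fun σ : Fin n → Bool => fun i => !(σ i)) := by
    intro σ; funext i; simp
  have step2 : rad n d ≤ rad n f₁ + rad n f₂ := by
    unfold rad
    rw [← mul_add]
    apply mul_le_mul_of_nonneg_left _ hpow
    have split : ∀ (σ : Fin n → Bool) (g : ι),
        (1 / n : ℝ) * ∑ i, (if σ i then (1 : ℝ) else -1) * d g i
          = ((1 / n : ℝ) * ∑ i, (if σ i then (1 : ℝ) else -1) * f₁ g i)
            + (1 / n : ℝ) * ∑ i, (if σ i then (-1 : ℝ) else 1) * f₂ g i := by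
      intro σ g
      rw [← mul_add, ← Finset.sum_add_distrib]
      congr 1
      apply Finset.sum_congr rfl
      intro i _
      simp only [hd]
      cases h : σ i <;> simp <;> ring
    have hle : (∑ σ : Fin n → Bool, univ.sup' univ_nonempty fun g =>
          (1 / n : ℝ) * ∑ i, (if σ i then (1 : ℝ) else -1) * d g i)
        ≤ (∑ σ : Fin n → Bool, univ.sup' univ_nonempty fun g =>
            (1 / n : ℝ) * ∑ i, (if σ i then (1 : ℝ) else -1) * f₁ g i)
          + ∑ σ : Fin n → Bool, univ.sup' univ_nonempty fun g =>
            (1 / n : ℝ) * ∑ i, (if σ i then (-1 : ℝ) else 1) * f₂ g i := by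
      rw [← Finset.sum_add_distrib]
      apply Finset.sum_le_sum
      intro σ _
      simp only [split]
      exact sup'_add_le _ _
    have hflip : (∑ σ : Fin n → Bool, univ.sup' univ_nonempty fun g =>
          (1 / n : ℝ) * ∑ i, (if σ i then (-1 : ℝ) else 1) * f₂ g i)
        = ∑ σ : Fin n → Bool, univ.sup' univ_nonempty fun g =>
          (1 / n : ℝ) * ∑ i, (if σ i then (1 : ℝ) else -1) * f₂ g i := by
      rw [← Equiv.sum_comp (Function.Involutive.toPerm _ flipinv)
        (fun σ => univ.sup' univ_nonempty fun g =>
          (1 / n : ℝ) * ∑ i, (if σ i then (1 : ℝ) else -1) * f₂ g i)]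
      apply Finset.sum_congr rfl
      intro σ _
      apply Finset.sup'_congr _ rfl
      intro g _
      congr 1
      apply Finset.sum_congr rfl
      intro i _
      have hb : (Function.Involutive.toPerm _ flipinv σ) i = !(σ i) := rfl
      rw [hb]
      cases σ i <;> simp
    calc (∑ σ : Fin n → Bool, univ.sup' univ_nonempty fun g =>
          (1 / n : ℝ) * ∑ i, (if σ i then (1 : ℝ) else -1) * d g i)
        ≤ _ := hle
      _ = _ := by rw [hflip]
  exact le_trans step1 step2
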